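/- Let C_n be a fuzzy strong cycle (all edges strong) u_1,...,u_n,u_1 of size q, and let μ_min, μ_max be the minimum and maximum edge memberships. Then Σ_{i=1}^n μ_s(u_i) ≤ q − (μ_max − μ_min), where μ_s(u_i) is the smaller of the two memberships of the edges incident to u_i. -/

import Mathlib

noncomputable section
open scoped Classical
open Finset

/-- A fuzzy graph on a vertex set `V`. -/
structure FuzzyGraph (V : Type*) where
  σ : V → ℝ
  μ : V → V → ℝ
  σ_nonneg : ∀ v, 0 ≤ σ v
  σ_le_one : ∀ v, σ v ≤ 1
  μ_nonneg : ∀ u v, 0 ≤ μ u v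
  μ_symm : ∀ u v, μ u v = μ v u
  μ_le : ∀ u v, μ u v ≤ min (σ u) (σ v)
  μ_irrefl : ∀ v, μ v v = 0

namespace FuzzyGraph

variable {V : Type*} (G : FuzzyGraph V)

/-- The strength of a walk (given as its list of vertices): the minimum
membership value of its edges (1 for walks without edges). -/
def walkStrength (l : List V) : ℝ :=
  ((l.zip l.tail).map fun p => G.μ p.1 p.2).foldr min 1

/-- `l` is a `u`–`v` walk: it starts at `u`, ends at `v`, and consecutive
vertices are joined by edges of positive membership. -/
def IsWalk (u v : V) (l : List V) : Prop :=
  l.head? = some u ∧ l.getLast? = some v ∧ l.Chain' (fun a b => 0 < G.μ a b)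

/-- `CONN_G(u,v)`: the maximum strength over all `u`–`v` paths. -/
def conn (u v : V) : ℝ :=
  sSup {s | ∃ l : List V, G.IsWalk u v l ∧ 2 ≤ l.length ∧ s = G.walkStrength l}

/-- The edge `(u,v)` is strong. -/
def StrongEdge (u v : V) : Prop :=
  0 < G.μ u v ∧ G.μ u v = G.conn u v

/-- `μ_s(u)`: the minimum membership value among strong edges at `u`
(`0` if `u` has no strong neighbor, via `Real.sInf_empty`). -/
def mus (u : V) : ℝ :=
  sInf {x | ∃ v, G.StrongEdge u v ∧ x = G.μ u v}

/-- The strong neighborhood degree `d_SN(v)`. -/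
def dSN [Fintype V] (v : V) : ℝ :=
  ∑ u ∈ Finset.univ.filter (fun u => G.StrongEdge v u), G.σ u

/-- `D` is a strong dominating set. -/
def IsStrongDomSet (D : Finset V) : Prop :=
  ∀ v, v ∉ D → ∃ u ∈ D, G.StrongEdge v u

/-- The weight of a strong dominating set. -/
def domWeight (D : Finset V) : ℝ := ∑ u ∈ D, G.mus u

/-- The strong domination number `γ_s(G)`. -/
def gammaS [Fintype V] : ℝ :=
  sInf {w | ∃ D : Finset V, G.IsStrongDomSet D ∧ w = G.domWeight D}

/-- `f` is a strong-neighbors Roman dominating function (SNRDF). -/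
def IsSNRDF (f : V → ℕ) : Prop :=
  (∀ v, f v ≤ 2) ∧ ∀ v, f v = 0 → ∃ u, G.StrongEdge v u ∧ f u = 2

/-- The weight of an SNRDF. -/
def snrdfWeight [Fintype V] (f : V → ℕ) : ℝ := ∑ v, (f v : ℝ) * G.mus v

/-- The strong-neighbors Roman domination number `γ_snR(G)`. -/
def gammaSnR [Fintype V] : ℝ :=
  sInf {w | ∃ f : V → ℕ, G.IsSNRDF f ∧ w = G.snrdfWeight f}

/-- The fuzzy subgraph induced by the vertices satisfying `p`. -/
def induce (p : V → Prop) : FuzzyGraph {v // p v} where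
  σ v := G.σ v
  μ u v := G.μ u v
  σ_nonneg v := G.σ_nonneg v
  σ_le_one v := G.σ_le_one v
  μ_nonneg u v := G.μ_nonneg u v
  μ_symm u v := G.μ_symm u v
  μ_le u v := G.μ_le u v
  μ_irrefl v := G.μ_irrefl v

/-- The minimum membership value among the strong edges of `G`. -/
def muMin : ℝ := sInf {x | ∃ u v, G.StrongEdge u v ∧ x = G.μ u v}

/-- The complement of a fuzzy graph. -/
def compl : FuzzyGraph V where
  σ := G.σ
  μ u v := if u = v then 0 else min (G.σ u) (G.σ v) - G.μ u v
  σ_nonneg := G.σ_nonneg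
  σ_le_one := G.σ_le_one
  μ_nonneg u v := by
    by_cases h : u = v
    · simp [h]
    · simp only [if_neg h, sub_nonneg]
      exact G.μ_le u v
  μ_symm u v := by
    by_cases h : u = v
    · simp [h]
    · have h' : ¬ v = u := fun hh => h hh.symm
      simp only [if_neg h, if_neg h', min_comm (G.σ u), G.μ_symm u v]
  μ_le u v := by
    by_cases h : u = v
    · subst h
      simp only [if_pos rfl, le_min_iff]
      exact ⟨G.σ_nonneg u, G.σ_nonneg u⟩
    · simp only [if_neg h]
      have := G.μ_nonneg u v
      linarith
  μ_irrefl v := by simp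

end FuzzyGraph


private lemma foldr_min_comm (a b : ℝ) (L : List ℝ) :
    L.foldr min (min a b) = min a (L.foldr min b) := by
  induction L with
  | nil => rfl
  | cons c L ih => simp only [List.foldr, ih]; rw [min_left_comm]

private lemma foldr_min_reverse (b : ℝ) (L : List ℝ) :
    L.reverse.foldr min b = L.foldr min b := by
  induction L generalizing b with
  | nil => rfl
  | cons a L ih =>
      simp only [List.reverse_cons, List.foldr_append, List.foldr, List.foldr_nil]
      rw [ih (min a b), foldr_min_comm]

private lemma zip_tail_append {V : Type*} (l : List V) (hl : l ≠ []) (a : V) :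
    (l ++ [a]).zip (l ++ [a]).tail = l.zip l.tail ++ [(l.getLast hl, a)] := by
  induction l with
  | nil => exact absurd rfl hl
  | cons b t ih =>
      cases t with
      | nil => simp [List.zip]
      | cons c t' =>
          have h' : (c :: t') ≠ [] := by simp
          have key := ih h'
          have h1 : (b :: (c :: t')) ++ [a] = b :: ((c :: t') ++ [a]) := rfl
          rw [h1]
          have h2 : (b :: ((c :: t') ++ [a])).tail = (c :: t') ++ [a] := rfl
          rw [h2]
          have h3 : (c :: t') ++ [a] = c :: (t' ++ [a]) := rfl
          have key' : (c :: t' ++ [a]).zip (t' ++ [a]) =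
              (c :: t').zip (c :: t').tail ++ [((c :: t').getLast h', a)] := key
          rw [h3] at key'
          rw [h3, List.zip_cons_cons, key']
          simp [List.getLast]

private lemma edges_reverse {V : Type*} (μ : V → V → ℝ) (hsymm : ∀ u v, μ u v = μ v u)
    (l : List V) :
    ((l.reverse.zip l.reverse.tail).map fun p => μ p.1 p.2) =
      (((l.zip l.tail).map fun p => μ p.1 p.2)).reverse := by
  induction l with
  | nil => rfl
  | cons a t ih =>
      cases t with
      | nil => rfl
      | cons c t' =>
          have hne : (c :: t').reverse ≠ [] := by simp
          have h1 : (a :: c :: t').reverse = (c :: t').reverse ++ [a] :=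
            List.reverse_cons
          rw [h1, zip_tail_append _ hne a, List.map_append, ih]
          have h2 : (c :: t').reverse.getLast hne = c := List.getLast_reverse hne
          simp [h2, hsymm c a]

namespace FuzzyGraph

variable {V : Type*} (G : FuzzyGraph V)

private lemma walkStrength_reverse (l : List V) :
    G.walkStrength l.reverse = G.walkStrength l := by
  unfold walkStrength
  rw [edges_reverse G.μ G.μ_symm, foldr_min_reverse]

private lemma isWalk_reverse {u v : V} {l : List V} (h : G.IsWalk u v l) :
    G.IsWalk v u l.reverse := by
  obtain ⟨h1, h2, h3⟩ := h
  refine ⟨?_, ?_, ?_⟩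
  · rw [List.head?_reverse]; exact h2
  · rw [List.getLast?_reverse]; exact h1
  · unfold List.Chain' at h3 ⊢
    rw [List.isChain_reverse]
    exact h3.imp fun a b hab => by
      show 0 < G.μ b a
      rw [G.μ_symm b a]; exact hab

private lemma conn_symm (u v : V) : G.conn u v = G.conn v u := by
  unfold conn
  congr 1
  ext s
  constructor
  · rintro ⟨l, hw, hl, rfl⟩
    exact ⟨l.reverse, G.isWalk_reverse hw, by simpa using hl,
      (G.walkStrength_reverse l).symm⟩
  · rintro ⟨l, hw, hl, rfl⟩
    exact ⟨l.reverse, G.isWalk_reverse hw, by simpa using hl,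
      (G.walkStrength_reverse l).symm⟩

private lemma strongEdge_symm {u v : V} (h : G.StrongEdge u v) : G.StrongEdge v u :=
  ⟨by rw [G.μ_symm v u]; exact h.1,
   by rw [G.μ_symm v u, G.conn_symm v u]; exact h.2⟩

end FuzzyGraph

open Fin.NatCast Fin.CommRing in
private lemma cycle_min_sum {n : ℕ} [NeZero n] (w : Fin n → ℝ) (j k : Fin n) :
    ∑ i : Fin n, min (w (i-1)) (w i) ≤ (∑ i : Fin n, w i) - (w k - w j) := by
  have hmin : ∀ i : Fin n, min (w (i-1)) (w i) = w i - max (w i - w (i-1)) 0 := by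
    intro i
    rcases le_total (w (i-1)) (w i) with h | h
    · rw [min_eq_left h, max_eq_left (by linarith)]; ring
    · rw [min_eq_right h, max_eq_right (by linarith)]; ring
  calc ∑ i : Fin n, min (w (i-1)) (w i)
      = (∑ i : Fin n, w i) - ∑ i : Fin n, max (w i - w (i-1)) 0 := by
        rw [← Finset.sum_sub_distrib]; exact Finset.sum_congr rfl fun i _ => hmin i
    _ ≤ (∑ i : Fin n, w i) - (w k - w j) := by
        have key : w k - w j ≤ ∑ i : Fin n, max (w i - w (i-1)) 0 := by
          set d : ℕ := (k - j).val with hdd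
          have hd : j + ((d : ℕ) : Fin n) = k := by
            rw [hdd, Fin.cast_val_eq_self]; ring
          have htel : ∑ t ∈ Finset.range d,
              (w (j + ((t+1 : ℕ) : Fin n)) - w (j + ((t : ℕ) : Fin n)))
              = w k - w j := by
            rw [Finset.sum_range_sub (fun t => w (j + ((t : ℕ) : Fin n))) d]
            rw [hd]
            norm_num
          rw [← htel]
          have hstep : ∀ t ∈ Finset.range d,
              w (j + ((t+1 : ℕ) : Fin n)) - w (j + ((t : ℕ) : Fin n))
                ≤ max (w (j + ((t : ℕ) : Fin n) + 1) - w (j + ((t : ℕ) : Fin n) + 1 - 1)) 0 := by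
            intro t _
            have e1 : ((t+1 : ℕ) : Fin n) = ((t : ℕ) : Fin n) + 1 := by push_cast; ring
            have e2 : j + ((t : ℕ) : Fin n) + 1 - 1 = j + ((t : ℕ) : Fin n) := by ring
            rw [e1, e2, ← add_assoc]
            exact le_max_left _ _
          calc ∑ t ∈ Finset.range d,
                (w (j + ((t+1 : ℕ) : Fin n)) - w (j + ((t : ℕ) : Fin n)))
              ≤ ∑ t ∈ Finset.range d,
                max (w (j + ((t : ℕ) : Fin n) + 1) - w (j + ((t : ℕ) : Fin n) + 1 - 1)) 0 :=
                Finset.sum_le_sum hstep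
            _ = ∑ i ∈ (Finset.range d).image (fun t : ℕ => j + ((t : ℕ) : Fin n) + 1),
                max (w i - w (i - 1)) 0 := by
                rw [Finset.sum_image]
                intro t1 ht1 t2 ht2 h
                have hdn : d < n := (k - j).isLt
                have ht1' : t1 < n := lt_trans (Finset.mem_range.mp ht1) hdn
                have ht2' : t2 < n := lt_trans (Finset.mem_range.mp ht2) hdn
                have : ((t1 : ℕ) : Fin n) = ((t2 : ℕ) : Fin n) := by
                  have := h
                  field_simp at this
                  exact add_left_cancel (add_right_cancel this)
                have := congrArg Fin.val this
                rwa [Fin.val_cast_of_lt ht1', Fin.val_cast_of_lt ht2'] at this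
            _ ≤ ∑ i : Fin n, max (w i - w (i - 1)) 0 := by
                apply Finset.sum_le_sum_of_subset_of_nonneg (Finset.subset_univ _)
                intro i _ _
                exact le_max_right _ _
        linarith

/-- for a fuzzy strong cycle,
`Σ μ_s(u_i) ≤ q − (μ_max − μ_min)`. -/
theorem sum_mus_le_of_strong_cycle {n : ℕ} [NeZero n] (hn : 3 ≤ n)
    (G : FuzzyGraph (Fin n))
    (hadj : ∀ i j : Fin n, 0 < G.μ i j ↔ (j = i + 1 ∨ i = j + 1))
    (hstrong : ∀ i : Fin n, G.StrongEdge i (i + 1)) :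
    ∑ i : Fin n, G.mus i ≤
      (∑ i : Fin n, G.μ i (i + 1)) -
        (sSup {x | ∃ i : Fin n, x = G.μ i (i + 1)} -
          sInf {x | ∃ i : Fin n, x = G.μ i (i + 1)}) := by
  
  set w : Fin n → ℝ := fun i => G.μ i (i+1) with hw
  have hsub : ∀ i : Fin n, i - 1 + 1 = i := fun i => by open Fin.CommRing in ring
  have hmus : ∀ i : Fin n, G.mus i = min (w (i-1)) (w i) := by
    intro i
    have hset : {x | ∃ v, G.StrongEdge i v ∧ x = G.μ i v}
        = {G.μ i (i+1), G.μ i (i-1)} := by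
      ext x
      constructor
      · rintro ⟨v, hv, rfl⟩
        rcases (hadj i v).mp hv.1 with h | h
        · left; rw [h]
        · right
          have : v = i - 1 := by rw [h]; open Fin.CommRing in ring
          rw [this]
          exact rfl
      · rintro (rfl | rfl)
        · exact ⟨i+1, hstrong i, rfl⟩
        · refine ⟨i-1, ?_, rfl⟩
          have h1 := G.strongEdge_symm (hstrong (i-1))
          rwa [hsub i] at h1
    rw [FuzzyGraph.mus, hset, csInf_pair]
    rw [G.μ_symm i (i-1)]
    have : G.μ (i-1) i = w (i-1) := by rw [hw]; simp only [hsub i]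
    rw [this, min_comm]
  have hSet : {x | ∃ i : Fin n, x = G.μ i (i + 1)} = Set.range w := by
    ext x; exact ⟨fun ⟨i, hi⟩ => ⟨i, hi.symm⟩, fun ⟨i, hi⟩ => ⟨i, hi.symm⟩⟩
  have hne : (Set.range w).Nonempty := ⟨w 0, 0, rfl⟩
  have hfin : (Set.range w).Finite := Set.finite_range w
  obtain ⟨k, hk⟩ := hne.csSup_mem hfin
  obtain ⟨j, hj⟩ := hne.csInf_mem hfin
  rw [hSet, ← hk, ← hj]
  calc ∑ i : Fin n, G.mus i = ∑ i : Fin n, min (w (i-1)) (w i) :=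
        Finset.sum_congr rfl fun i _ => hmus i
    _ ≤ (∑ i : Fin n, w i) - (w k - w j) := cycle_min_sum w j k
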